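/- arXiv:1803.06216 — 2 statements merged into one kernel-verified Lean document; each statement's English description precedes it below -/
import Mathlib

section
/- Under the setup, no mixed arc crosses a top arc: if (b₁,r₁) ∈ E' has a mixed witness u₁ and (b₂,r₂) ∈ E' has a top witness, then, writing a = min(t b₁, t r₁), γ = min(t b₂, t r₂) and δ = max(t b₂, t r₂), the open intervals (a, t u₁) and (γ, δ) do not interleave. -/
/-- The above-anchored L-frame `A(t,h,w) = ({t} × [-t, -t+h]) ∪ ([t, t+w] × {-t})`. -/
def Aframe (t h w : ℝ) : Set (ℝ × ℝ) :=
  ({t} : Set ℝ) ×ˢ Set.Icc (-t) (-t + h) ∪ Set.Icc t (t + w) ×ˢ ({-t} : Set ℝ)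

/-- The intersection graph of a family of subsets of the plane. -/
def interGraph {V : Type*} (F : V → Set (ℝ × ℝ)) : SimpleGraph V where
  Adj u v := u ≠ v ∧ (F u ∩ F v).Nonempty
  symm := by
    constructor
    intro u v h
    exact ⟨h.1.symm, by rw [Set.inter_comm]; exact h.2⟩
  loopless := by
    constructor
    intro u h
    exact h.1 rfl

/-- A set of vertices is a dominating set: every vertex is in it or adjacent to a member. -/
def IsDomSet {V : Type*} (G : SimpleGraph V) (D : Set V) : Prop :=
  ∀ v, v ∈ D ∨ ∃ u ∈ D, G.Adj u v

/-- Euclidean distance between the corners `(t b, -(t b))` and `(t r, -(t r))` of the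
L-frames indexed by `b` and `r`. -/
noncomputable def cornerDist {V : Type*} (t : V → ℝ) (b r : V) : ℝ :=
  Real.sqrt ((t b - t r) ^ 2 + ((-(t b)) - (-(t r))) ^ 2)

/-- `(b,r) ∈ S(u)`: `b ∈ B`, `r ∈ R`, and both frames `F b` and `F r` intersect `F u`. -/
def InS {V : Type*} (F : V → Set (ℝ × ℝ)) (B R : Set V) (u b r : V) : Prop :=
  b ∈ B ∧ r ∈ R ∧ (F b ∩ F u).Nonempty ∧ (F r ∩ F u).Nonempty

/-- `u` is a witness of `(b,r)`: `(b,r) ∈ S(u)` and the distance between the corners of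
`F b` and `F r` is minimum among all pairs in `S(u)`. -/
def IsWitness {V : Type*} (F : V → Set (ℝ × ℝ)) (t : V → ℝ) (B R : Set V)
    (u b r : V) : Prop :=
  InS F B R u b r ∧ ∀ b' r', InS F B R u b' r' → cornerDist t b r ≤ cornerDist t b' r'

/-- `(b,r) ∈ E'`: the pair admits a witness. -/
def InE' {V : Type*} (F : V → Set (ℝ × ℝ)) (t : V → ℝ) (B R : Set V) (b r : V) : Prop :=
  ∃ u, IsWitness F t B R u b r

/-- `u` is a top witness of `(b,r)`. -/
def TopWitness {V : Type*} (F : V → Set (ℝ × ℝ)) (t : V → ℝ) (B R : Set V)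
    (u b r : V) : Prop :=
  IsWitness F t B R u b r ∧ t b ≤ t u ∧ t r ≤ t u

/-- `u` is a down witness of `(b,r)`. -/
def DownWitness {V : Type*} (F : V → Set (ℝ × ℝ)) (t : V → ℝ) (B R : Set V)
    (u b r : V) : Prop :=
  IsWitness F t B R u b r ∧ t u ≤ t b ∧ t u ≤ t r

/-- `u` is a mixed witness of `(b,r)`. -/
def MixedWitness {V : Type*} (F : V → Set (ℝ × ℝ)) (t : V → ℝ) (B R : Set V)
    (u b r : V) : Prop :=
  IsWitness F t B R u b r ∧ min (t b) (t r) < t u ∧ t u < max (t b) (t r)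

/-- Open intervals `(p,q)` and `(r,s)` interleave. -/
def Interleave (p q r s : ℝ) : Prop :=
  (p < r ∧ r < q ∧ q < s) ∨ (r < p ∧ p < s ∧ s < q)


lemma aframe_inter_bounds {t₁ h₁ w₁ t₂ h₂ w₂ : ℝ} (hlt : t₁ < t₂)
    (hne : (Aframe t₁ h₁ w₁ ∩ Aframe t₂ h₂ w₂).Nonempty) :
    t₂ - t₁ ≤ w₁ ∧ t₂ - t₁ ≤ h₂ := by
  obtain ⟨⟨x, y⟩, hx, hy⟩ := hne
  simp only [Aframe, Set.mem_union, Set.mem_prod, Set.mem_singleton_iff, Set.mem_Icc] at hx hy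
  rcases hx with ⟨hx1, hx2, hx3⟩ | ⟨⟨hx1, hx2⟩, hx3⟩ <;>
    rcases hy with ⟨hy1, hy2, hy3⟩ | ⟨⟨hy1, hy2⟩, hy3⟩ <;>
    constructor <;> linarith

lemma aframe_inter_of {t₁ h₁ w₁ t₂ h₂ w₂ : ℝ} (hle : t₁ ≤ t₂)
    (hw1 : t₂ - t₁ ≤ w₁) (hh2 : t₂ - t₁ ≤ h₂) :
    (Aframe t₁ h₁ w₁ ∩ Aframe t₂ h₂ w₂).Nonempty := by
  refine ⟨(t₂, -t₁),
    Set.mem_union_right _ (Set.mk_mem_prod (Set.mem_Icc.mpr ⟨hle, by linarith⟩)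
      (Set.mem_singleton_iff.mpr rfl)),
    Set.mem_union_left _ (Set.mk_mem_prod (Set.mem_singleton_iff.mpr rfl)
      (Set.mem_Icc.mpr ⟨by linarith, by linarith⟩))⟩

lemma cornerDist_eq_sqrt2_mul {V : Type*} (t : V → ℝ) (b r : V) :
    cornerDist t b r = Real.sqrt 2 * |t b - t r| := by
  rw [cornerDist, show (t b - t r) ^ 2 + ((-(t b)) - (-(t r))) ^ 2 = 2 * (t b - t r) ^ 2 by ring,
    Real.sqrt_mul (by norm_num : (0:ℝ) ≤ 2), Real.sqrt_sq_eq_abs]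

lemma witness_abs_le {V : Type*} {F : V → Set (ℝ × ℝ)} {t : V → ℝ} {B R : Set V}
    {u b r b' r' : V} (hwit : IsWitness F t B R u b r) (h' : InS F B R u b' r') :
    |t b - t r| ≤ |t b' - t r'| := by
  have hle := hwit.2 b' r' h'
  rw [cornerDist_eq_sqrt2_mul, cornerDist_eq_sqrt2_mul] at hle
  exact le_of_mul_le_mul_left hle (Real.sqrt_pos.mpr (by norm_num))

lemma abs_sub_lt_of_between {x p q c : ℝ} (h1 : min p q < x) (h2 : x < max p q)
    (hc : c = p ∨ c = q) : |x - c| < |p - q| := by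
  have hminp := min_le_left p q
  have hminq := min_le_right p q
  have hmaxp := le_max_left p q
  have hmaxq := le_max_right p q
  have hpq : |p - q| = max p q - min p q := (abs_sub_comm p q).trans (max_sub_min_eq_abs p q).symm
  rw [hpq, abs_sub_lt_iff]
  rcases hc with rfl | rfl
  · constructor <;> linarith
  · constructor <;> linarith

/-- No mixed arc crosses a top arc. -/
theorem no_mixed_arc_crosses_top_arc {V : Type*} [Fintype V]
    (t h w : V → ℝ) (hh : ∀ v, 0 ≤ h v) (hw : ∀ v, 0 ≤ w v)
    (F : V → Set (ℝ × ℝ)) (hF : ∀ v, F v = Aframe (t v) (h v) (w v))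
    (B R : Set V) (hBR : Disjoint B R)
    (hB : IsDomSet (interGraph F) B) (hR : IsDomSet (interGraph F) R)
    (b₁ r₁ b₂ r₂ u₁ : V)
    (h₁ : MixedWitness F t B R u₁ b₁ r₁)
    (h₂ : ∃ u₂, TopWitness F t B R u₂ b₂ r₂) :
    ¬ Interleave (min (t b₁) (t r₁)) (t u₁)
        (min (t b₂) (t r₂)) (max (t b₂) (t r₂)) := by
  intro hint
  unfold Interleave at hint
  obtain ⟨hw₁, hml, hmh⟩ := h₁
  obtain ⟨u₂, hw₂, htb₂, htr₂⟩ := h₂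
  obtain ⟨hb₁B, hr₁R, hb₁u, hr₁u⟩ := hw₁.1
  obtain ⟨hb₂B, hr₂R, hb₂u, hr₂u⟩ := hw₂.1
  have inter_bounds : ∀ x y : V, t x < t y → (F x ∩ F y).Nonempty →
      t y - t x ≤ w x ∧ t y - t x ≤ h y := by
    intro x y hlt hne
    rw [hF x, hF y] at hne
    exact aframe_inter_bounds hlt hne
  have inter_of : ∀ x y : V, t x ≤ t y → t y - t x ≤ w x → t y - t x ≤ h y →
      (F x ∩ F y).Nonempty := by
    intro x y hle hw1 hh1
    rw [hF x, hF y]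
    exact aframe_inter_of hle hw1 hh1
  have hδu₂ : max (t b₂) (t r₂) ≤ t u₂ := max_le htb₂ htr₂
  obtain ⟨p₁, hp₁u, hp₁t, hp₁id⟩ :
      ∃ p, (F p ∩ F u₁).Nonempty ∧ t p = min (t b₁) (t r₁) ∧ (p = b₁ ∨ p = r₁) := by
    rcases min_cases (t b₁) (t r₁) with ⟨he, _⟩ | ⟨he, _⟩
    · exact ⟨b₁, hb₁u, he.symm, Or.inl rfl⟩
    · exact ⟨r₁, hr₁u, he.symm, Or.inr rfl⟩
  obtain ⟨hwp₁, hhu₁⟩ := inter_bounds p₁ u₁ (by rw [hp₁t]; exact hml) hp₁u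
  rcases hint with ⟨hc1, hc2, hc3⟩ | ⟨hc1, hc2, hc3⟩
  · -- Case 1 : a < γ < t u₁ < δ ≤ t u₂
    have hδ2 : t u₁ < t u₂ := lt_of_lt_of_le hc3 hδu₂
    rcases min_cases (t b₂) (t r₂) with ⟨he, _⟩ | ⟨he, _⟩
    · rw [he] at hc1 hc2
      have hwb₂ := (inter_bounds b₂ u₂ (by linarith) hb₂u).1
      have hnew : (F b₂ ∩ F u₁).Nonempty :=
        inter_of b₂ u₁ hc2.le (by linarith) (by linarith)
      have hle := witness_abs_le hw₁ ⟨hb₂B, hr₁R, hnew, hr₁u⟩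
      have hlt := abs_sub_lt_of_between (x := t b₂) (p := t b₁) (q := t r₁)
        hc1 (by linarith) (Or.inr rfl)
      linarith
    · rw [he] at hc1 hc2
      have hwr₂ := (inter_bounds r₂ u₂ (by linarith) hr₂u).1
      have hnew : (F r₂ ∩ F u₁).Nonempty :=
        inter_of r₂ u₁ hc2.le (by linarith) (by linarith)
      have hle := witness_abs_le hw₁ ⟨hb₁B, hr₂R, hb₁u, hnew⟩
      have hlt := abs_sub_lt_of_between (x := t r₂) (p := t b₁) (q := t r₁)
        hc1 (by linarith) (Or.inl rfl)
      rw [abs_sub_comm] at hlt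
      linarith
  · -- Case 2 : γ < a < δ < t u₁
    rcases le_or_gt (t u₁) (t u₂) with hcase | hcase
    · rcases max_cases (t b₂) (t r₂) with ⟨he, _⟩ | ⟨he, _⟩
      · rw [he] at hc2 hc3
        have hwb₂ := (inter_bounds b₂ u₂ (by linarith) hb₂u).1
        have hnew : (F b₂ ∩ F u₁).Nonempty :=
          inter_of b₂ u₁ hc3.le (by linarith) (by linarith)
        have hle := witness_abs_le hw₁ ⟨hb₂B, hr₁R, hnew, hr₁u⟩
        have hlt := abs_sub_lt_of_between (x := t b₂) (p := t b₁) (q := t r₁)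
          hc2 (by linarith) (Or.inr rfl)
        linarith
      · rw [he] at hc2 hc3
        have hwr₂ := (inter_bounds r₂ u₂ (by linarith) hr₂u).1
        have hnew : (F r₂ ∩ F u₁).Nonempty :=
          inter_of r₂ u₁ hc3.le (by linarith) (by linarith)
        have hle := witness_abs_le hw₁ ⟨hb₁B, hr₂R, hb₁u, hnew⟩
        have hlt := abs_sub_lt_of_between (x := t r₂) (p := t b₁) (q := t r₁)
          hc2 (by linarith) (Or.inl rfl)
        rw [abs_sub_comm] at hlt
        linarith
    · -- t u₂ < t u₁ : show F p₁ meets F u₂ and contradict minimality at u₂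
      have hγu₂ : min (t b₂) (t r₂) < t u₂ := by linarith
      have hAu₂ : min (t b₁) (t r₁) < t u₂ := by linarith
      have hhu₂ : t u₂ - min (t b₂) (t r₂) ≤ h u₂ := by
        rcases min_cases (t b₂) (t r₂) with ⟨he, _⟩ | ⟨he, _⟩ <;> rw [he] at hγu₂ ⊢
        · exact (inter_bounds b₂ u₂ hγu₂ hb₂u).2
        · exact (inter_bounds r₂ u₂ hγu₂ hr₂u).2
      have hnew : (F p₁ ∩ F u₂).Nonempty :=
        inter_of p₁ u₂ (by linarith) (by linarith) (by linarith)
      rcases hp₁id with hid | hid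
      · rw [hid] at hnew hp₁t
        have hle := witness_abs_le hw₂ ⟨hb₁B, hr₂R, hnew, hr₂u⟩
        have hlt := abs_sub_lt_of_between (x := t b₁) (p := t b₂) (q := t r₂)
          (by linarith) (by linarith) (Or.inr rfl)
        linarith
      · rw [hid] at hnew hp₁t
        have hle := witness_abs_le hw₂ ⟨hb₂B, hr₁R, hb₂u, hnew⟩
        have hlt := abs_sub_lt_of_between (x := t r₁) (p := t b₂) (q := t r₂)
          (by linarith) (by linarith) (Or.inl rfl)
        rw [abs_sub_comm] at hlt
        linarith
end

section
/- Under the setup, no two mixed arcs cross: if (b₁,r₁) ∈ E' has a mixed witness u₁, (b₂,r₂) ∈ E' has a mixed witness u₂, and t u₁ ≠ t u₂, then, writing aᵢ = min(t bᵢ, t rᵢ) and cᵢ = max(t bᵢ, t rᵢ) for i = 1,2, the open intervals (a₁, t u₁) and (a₂, t u₂) do not interleave, and the open intervals (t u₁, c₁) and (t u₂, c₂) do not interleave. -/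
/-- Intersection criterion for two above-anchored L-frames with `ta ≤ tb`. -/
lemma aframe_inter_iff {ta ha wa tb hb wb : ℝ} (hwa : 0 ≤ wa) (hhb : 0 ≤ hb)
    (hab : ta ≤ tb) :
    (Aframe ta ha wa ∩ Aframe tb hb wb).Nonempty ↔ tb ≤ ta + wa ∧ -ta ≤ -tb + hb := by
  constructor
  · rintro ⟨⟨px, py⟩, hpa, hpb⟩
    simp only [Aframe, Set.mem_union, Set.mem_prod, Set.mem_singleton_iff,
      Set.mem_Icc] at hpa hpb
    rcases hpa with ⟨e1, e2, e3⟩ | ⟨⟨e1, e2⟩, e3⟩ <;>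
      rcases hpb with ⟨g1, g2, g3⟩ | ⟨⟨g1, g2⟩, g3⟩ <;>
      exact ⟨by linarith, by linarith⟩
  · rintro ⟨h1, h2⟩
    refine ⟨(tb, -ta), ?_, ?_⟩ <;>
      simp only [Aframe, Set.mem_union, Set.mem_prod, Set.mem_singleton_iff, Set.mem_Icc]
    · exact Or.inr ⟨⟨hab, h1⟩, trivial⟩
    · exact Or.inl ⟨trivial, by linarith, by linarith⟩

lemma cornerDist_lt' {V : Type*} (t : V → ℝ) (a b c d : V)
    (h : |t a - t b| < |t c - t d|) : cornerDist t a b < cornerDist t c d := by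
  unfold cornerDist
  apply Real.sqrt_lt_sqrt (by positivity)
  nlinarith [sq_abs (t a - t b), sq_abs (t c - t d), abs_nonneg (t a - t b)]

lemma abs_helper {x b r : ℝ} (h1 : min b r < x) (h2 : x < max b r) :
    |x - b| < |b - r| ∧ |x - r| < |b - r| := by
  constructor <;>
  · rw [show |b - r| = max b r - min b r from by rw [abs_sub_comm]; exact (max_sub_min_eq_abs b r).symm, abs_sub_lt_iff]
    constructor <;>
      linarith [min_le_left b r, le_max_left b r, min_le_right b r, le_max_right b r]

/-- Key contradiction: a witness `u` of `(b,r)` cannot meet a colored frame whose corner is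
strictly between the corners of `F b` and `F r`. -/
lemma witness_key {V : Type*} (F : V → Set (ℝ × ℝ)) (t : V → ℝ) (B R : Set V)
    (u b r v : V) (hwit : IsWitness F t B R u b r) (hv : (F v ∩ F u).Nonempty)
    (hvm : v ∈ B ∨ v ∈ R)
    (hmin : min (t b) (t r) < t v) (hmax : t v < max (t b) (t r)) : False := by
  obtain ⟨⟨hb, hr, hbu, hru⟩, hopt⟩ := hwit
  obtain ⟨e1, e2⟩ := abs_helper hmin hmax
  rcases hvm with hvB | hvR
  · have h1 := hopt v r ⟨hvB, hr, hv, hru⟩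
    have h2 : cornerDist t v r < cornerDist t b r := cornerDist_lt' t v r b r e2
    linarith
  · have h1 := hopt b v ⟨hb, hvR, hbu, hv⟩
    have h2 : cornerDist t b v < cornerDist t b r := by
      apply cornerDist_lt' t b v b r
      rwa [abs_sub_comm]
    linarith

/-- Data extracted from a mixed witness: ordered endpoints with the four arm-length
inequalities. -/
lemma witness_data {V : Type*} (t h w : V → ℝ) (hh : ∀ v, 0 ≤ h v) (hw : ∀ v, 0 ≤ w v)
    (F : V → Set (ℝ × ℝ)) (hF : ∀ v, F v = Aframe (t v) (h v) (w v))
    (B R : Set V) (u b r : V) (hm : MixedWitness F t B R u b r) :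
    ∃ x y : V, t x = min (t b) (t r) ∧ t y = max (t b) (t r) ∧
      (x ∈ B ∨ x ∈ R) ∧ (y ∈ B ∨ y ∈ R) ∧
      t u ≤ t x + w x ∧ -(t x) ≤ -(t u) + h u ∧
      t y ≤ t u + w u ∧ -(t u) ≤ -(t y) + h y := by
  obtain ⟨⟨⟨hbB, hrR, hbu, hru⟩, _⟩, hm1, hm2⟩ := hm
  rw [hF b, hF u] at hbu
  rw [hF r, hF u] at hru
  rcases le_total (t b) (t r) with hle | hle
  · have hmin : min (t b) (t r) = t b := min_eq_left hle
    have hmax : max (t b) (t r) = t r := max_eq_right hle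
    have c1 := (aframe_inter_iff (hw b) (hh u) (by linarith)).mp hbu
    rw [Set.inter_comm] at hru
    have c2 := (aframe_inter_iff (hw u) (hh r) (by linarith)).mp hru
    exact ⟨b, r, hmin.symm, hmax.symm, Or.inl hbB, Or.inr hrR,
      c1.1, c1.2, c2.1, c2.2⟩
  · have hmin : min (t b) (t r) = t r := min_eq_right hle
    have hmax : max (t b) (t r) = t b := max_eq_left hle
    have c1 := (aframe_inter_iff (hw r) (hh u) (by linarith)).mp hru
    rw [Set.inter_comm] at hbu
    have c2 := (aframe_inter_iff (hw u) (hh b) (by linarith)).mp hbu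
    exact ⟨r, b, hmin.symm, hmax.symm, Or.inr hrR, Or.inl hbB,
      c1.1, c1.2, c2.1, c2.2⟩

/-- No two mixed arcs cross. -/
theorem no_two_mixed_arcs_cross {V : Type*} [Fintype V]
    (t h w : V → ℝ) (hh : ∀ v, 0 ≤ h v) (hw : ∀ v, 0 ≤ w v)
    (F : V → Set (ℝ × ℝ)) (hF : ∀ v, F v = Aframe (t v) (h v) (w v))
    (B R : Set V) (hBR : Disjoint B R)
    (hB : IsDomSet (interGraph F) B) (hR : IsDomSet (interGraph F) R)
    (b₁ r₁ b₂ r₂ u₁ u₂ : V)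
    (h₁ : MixedWitness F t B R u₁ b₁ r₁)
    (h₂ : MixedWitness F t B R u₂ b₂ r₂)
    (hne : t u₁ ≠ t u₂) :
    ¬ Interleave (min (t b₁) (t r₁)) (t u₁) (min (t b₂) (t r₂)) (t u₂) ∧
    ¬ Interleave (t u₁) (max (t b₁) (t r₁)) (t u₂) (max (t b₂) (t r₂)) := by
  obtain ⟨x₁, y₁, hx₁, hy₁, hx₁m, hy₁m, L₁, H₁, W₁, K₁⟩ :=
    witness_data t h w hh hw F hF B R u₁ b₁ r₁ h₁
  obtain ⟨x₂, y₂, hx₂, hy₂, hx₂m, hy₂m, L₂, H₂, W₂, K₂⟩ :=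
    witness_data t h w hh hw F hF B R u₂ b₂ r₂ h₂
  have hA₁ : min (t b₁) (t r₁) < t u₁ := h₁.2.1
  have hC₁ : t u₁ < max (t b₁) (t r₁) := h₁.2.2
  have hA₂ : min (t b₂) (t r₂) < t u₂ := h₂.2.1
  have hC₂ : t u₂ < max (t b₂) (t r₂) := h₂.2.2
  constructor <;> rintro (⟨q1, q2, q3⟩ | ⟨q1, q2, q3⟩)
  · -- a₁ < a₂ < t u₁ < t u₂ : use x₂ against witness u₁
    refine witness_key F t B R u₁ b₁ r₁ x₂ h₁.1 ?_ hx₂m (by linarith) (by linarith)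
    rw [hF x₂, hF u₁]
    exact (aframe_inter_iff (hw x₂) (hh u₁) (by linarith)).mpr
      ⟨by linarith, by linarith⟩
  · -- a₂ < a₁ < t u₂ < t u₁ : use x₁ against witness u₂
    refine witness_key F t B R u₂ b₂ r₂ x₁ h₂.1 ?_ hx₁m (by linarith) (by linarith)
    rw [hF x₁, hF u₂]
    exact (aframe_inter_iff (hw x₁) (hh u₂) (by linarith)).mpr
      ⟨by linarith, by linarith⟩
  · -- t u₁ < t u₂ < c₁ < c₂ : use y₁ against witness u₂
    refine witness_key F t B R u₂ b₂ r₂ y₁ h₂.1 ?_ hy₁m (by linarith) (by linarith)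
    rw [hF y₁, hF u₂, Set.inter_comm]
    exact (aframe_inter_iff (hw u₂) (hh y₁) (by linarith)).mpr
      ⟨by linarith, by linarith⟩
  · -- t u₂ < t u₁ < c₂ < c₁ : use y₂ against witness u₁
    refine witness_key F t B R u₁ b₁ r₁ y₂ h₁.1 ?_ hy₂m (by linarith) (by linarith)
    rw [hF y₂, hF u₁, Set.inter_comm]
    exact (aframe_inter_iff (hw u₁) (hh y₂) (by linarith)).mpr
      ⟨by linarith, by linarith⟩
end
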